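/- The function Ai is entire (complex-differentiable on all of ℂ, with entire derivative), and it satisfies the Airy differential equation: for every z ∈ ℂ, the second derivative of Ai at z equals z·Ai(z). -/

import Mathlib

open Complex

/-- The Airy function `Ai`, defined by its Maclaurin series. -/
noncomputable def Ai (z : ℂ) : ℂ :=
  (((1 / ((3 : ℝ) ^ ((2 : ℝ) / 3) * Real.pi)) : ℝ) : ℂ) *
    ∑' n : ℕ,
      ((Real.Gamma ((n + 1) / 3) / n.factorial * Real.sin (2 * (n + 1) * Real.pi / 3) : ℝ) : ℂ) *
        ((((3 : ℝ) ^ ((1 : ℝ) / 3) : ℝ) : ℂ) * z) ^ n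

noncomputable section AiryAux

/-- Summability criterion: eventual 3-step halving implies summability. -/
lemma airy_summable_of_step (f : ℕ → ℝ) (hf : ∀ n, 0 ≤ f n) (N : ℕ)
    (h : ∀ n, N ≤ n → f (n + 3) ≤ (1 / 2) * f n) : Summable f := by
  set w : ℝ := (2 : ℝ) ^ (-(3 : ℝ)⁻¹) with hw
  have hw0 : 0 < w := Real.rpow_pos_of_pos (by norm_num) _
  have hw1 : w < 1 := by
    have := Real.rpow_lt_one_of_one_lt_of_neg (x := (2:ℝ)) (by norm_num)
      (by norm_num : -(3:ℝ)⁻¹ < 0)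
    simpa [hw] using this
  have hw3 : w ^ 3 = 1 / 2 := by
    rw [hw, ← Real.rpow_natCast ((2:ℝ) ^ (-(3:ℝ)⁻¹)) 3, ← Real.rpow_mul (by norm_num)]
    norm_num
  have hw2' : w ^ 2 = (2:ℝ) ^ (-(2/3) : ℝ) := by
    rw [hw, ← Real.rpow_natCast ((2:ℝ) ^ (-(3:ℝ)⁻¹)) 2, ← Real.rpow_mul (by norm_num)]
    norm_num
  have hw2 : 1 ≤ 2 * w ^ 2 := by
    rw [hw2']
    have h21 : (2:ℝ) ^ (-1 : ℝ) ≤ (2:ℝ) ^ (-(2/3) : ℝ) :=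
      Real.rpow_le_rpow_of_exponent_le (by norm_num) (by norm_num)
    rw [Real.rpow_neg_one] at h21
    linarith
  set B : ℝ := f N + f (N + 1) + f (N + 2) with hB
  have hBnn : 0 ≤ B := by have := hf N; have := hf (N+1); have := hf (N+2); linarith
  set M : ℝ := 2 * B with hM
  have claim : ∀ k, f (N + k) ≤ M * w ^ k := by
    intro k
    induction k using Nat.strong_induction_on with
    | _ k ih =>
      match k, ih with
      | 0, _ => have h1 := hf (N+1); have h2 := hf (N+2); simp [M, B]; nlinarith
      | 1, _ =>
        have h1 := hf N; have h2 := hf (N+2)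
        have : w ^ 2 ≤ w ^ 1 := pow_le_pow_of_le_one hw0.le hw1.le (by norm_num)
        have hfB : f (N + 1) ≤ B := by simp [B]; nlinarith
        calc f (N + 1) ≤ B := hfB
          _ ≤ (2 * w ^ 2) * B := le_mul_of_one_le_left hBnn hw2
          _ ≤ (2 * w ^ 1) * B := by nlinarith
          _ = M * w ^ 1 := by ring
      | 2, _ =>
        have h1 := hf N; have h2 := hf (N+1)
        have hfB : f (N + 2) ≤ B := by simp [B]; nlinarith
        calc f (N + 2) ≤ B := hfB
          _ ≤ (2 * w ^ 2) * B := le_mul_of_one_le_left hBnn hw2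
          _ = M * w ^ 2 := by ring
      | (m + 3), ih =>
        have step := h (N + m) (Nat.le_add_right _ _)
        have prev := ih m (by omega)
        have : f (N + (m + 3)) ≤ (1/2) * (M * w ^ m) := by
          have : N + (m + 3) = (N + m) + 3 := by omega
          rw [this]
          calc f ((N + m) + 3) ≤ (1/2) * f (N + m) := step
            _ ≤ (1/2) * (M * w ^ m) := by nlinarith
        calc f (N + (m + 3)) ≤ (1/2) * (M * w ^ m) := this
          _ = M * w ^ (m + 3) := by rw [pow_add, hw3]; ring
  have hsum : Summable fun k => f (N + k) := by
    refine Summable.of_nonneg_of_le (fun k => hf _) claim ?_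
    exact (summable_geometric_of_lt_one hw0.le hw1).mul_left M
  exact (summable_nat_add_iff N).mp (by simpa [add_comm] using hsum)

end AiryAux

noncomputable section Airy2

/-- Summability of the Airy coefficient majorant at any radius. -/
lemma airy_gamma_summable (q : ℝ) (hq : 0 ≤ q) :
    Summable fun n : ℕ => Real.Gamma ((n + 1) / 3) / n.factorial * q ^ n := by
  set f : ℕ → ℝ := fun n => Real.Gamma ((n + 1) / 3) / n.factorial * q ^ n with hfdef
  have hf : ∀ n, 0 ≤ f n := by
    intro n
    have h1 : 0 < Real.Gamma ((n + 1) / 3) :=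
      Real.Gamma_pos_of_pos (by positivity)
    positivity
  refine airy_summable_of_step f hf ⌈q ^ 3⌉₊ ?_
  intro n hn
  have hq3 : q ^ 3 ≤ n := le_trans (Nat.le_ceil _) (by exact_mod_cast hn)
  have hGpos : 0 < Real.Gamma ((n + 1) / 3) := Real.Gamma_pos_of_pos (by positivity)
  have hGam : Real.Gamma (((n : ℝ) + 3 + 1) / 3) = (((n : ℝ) + 1) / 3) * Real.Gamma ((n + 1) / 3) := by
    have : ((n : ℝ) + 3 + 1) / 3 = ((n : ℝ) + 1) / 3 + 1 := by ring
    rw [this, Real.Gamma_add_one (by positivity)]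
  have hfact : ((n + 3).factorial : ℝ) = ((n:ℝ) + 1) * ((n:ℝ) + 2) * ((n:ℝ) + 3) * n.factorial := by
    push_cast [Nat.factorial_succ]
    ring
  have hfn3 : f (n + 3) = f n * (q ^ 3 * (((n:ℝ) + 1) / 3) /
      (((n:ℝ) + 1) * ((n:ℝ) + 2) * ((n:ℝ) + 3))) := by
    have hfac : (0:ℝ) < n.factorial := by exact_mod_cast n.factorial_pos
    rw [hfdef]
    simp only
    push_cast [hfact]
    rw [hGam]
    field_simp
    ring
  rw [hfn3]
  have hfnn := hf n
  have hfrac : q ^ 3 * (((n:ℝ) + 1) / 3) / (((n:ℝ) + 1) * ((n:ℝ) + 2) * ((n:ℝ) + 3)) ≤ 1 / 2 := by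
    rw [div_le_div_iff₀ (by positivity) (by norm_num)]
    have h1 : q ^ 3 * (((n:ℝ) + 1) / 3) ≤ (n:ℝ) * (((n:ℝ) + 1) / 3) := by
      have : (0:ℝ) ≤ ((n:ℝ) + 1) / 3 := by positivity
      nlinarith
    have h2 : (n:ℝ) * (((n:ℝ) + 1) / 3) * 2 ≤ 1 * (((n:ℝ) + 1) * ((n:ℝ) + 2) * ((n:ℝ) + 3)) := by
      have hn0 : (0:ℝ) ≤ (n:ℝ) := Nat.cast_nonneg n
      nlinarith [pow_nonneg hn0 3, sq_nonneg ((n:ℝ)), hn0]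
    linarith
  nlinarith

end Airy2

/-- Summability at every radius. -/
def AirySprop (c : ℕ → ℂ) : Prop := ∀ r : ℝ, 0 ≤ r → Summable fun n => ‖c n‖ * r ^ n

lemma AirySprop.shift {c : ℕ → ℂ} (h : AirySprop c) :
    AirySprop (fun n => ((n : ℂ) + 1) * c (n + 1)) := by
  intro r hr
  set s : ℝ := 2 * r + 1 with hs
  have hs1 : (1:ℝ) ≤ s := by simp [hs]; linarith
  have hsum : Summable fun n => ‖c n‖ * s ^ n := h s (by linarith)
  have hsum' : Summable fun n => 2 * (‖c (n + 1)‖ * s ^ (n + 1)) :=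
    (((summable_nat_add_iff 1).mpr hsum)).mul_left 2
  refine Summable.of_nonneg_of_le (fun n => by positivity) (fun n => ?_) hsum'
  have hnorm : ‖((n : ℂ) + 1) * c (n + 1)‖ = ((n:ℝ) + 1) * ‖c (n + 1)‖ := by
    rw [norm_mul]
    congr 1
    have : ((n : ℂ) + 1) = ((n + 1 : ℕ) : ℂ) := by push_cast; ring
    rw [this, norm_natCast]
    push_cast
    ring
  rw [hnorm]
  have hpow : ((n:ℝ) + 1) * r ^ n ≤ 2 * s ^ (n + 1) := by
    have h1 : ((n:ℝ) + 1) ≤ 2 ^ n := by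
      exact_mod_cast (Nat.lt_two_pow_self : n < 2 ^ n)
    have h2 : ((n:ℝ) + 1) * r ^ n ≤ 2 ^ n * r ^ n :=
      mul_le_mul_of_nonneg_right h1 (by positivity)
    have h3 : (2:ℝ) ^ n * r ^ n = (2 * r) ^ n := (mul_pow 2 r n).symm
    have h4 : (2 * r : ℝ) ^ n ≤ s ^ n := by
      apply pow_le_pow_left₀ (by linarith) (by simp [hs])
    have h5 : (s:ℝ) ^ n ≤ s ^ (n + 1) := by
      calc s ^ n = 1 * s ^ n := (one_mul _).symm
        _ ≤ s * s ^ n := mul_le_mul_of_nonneg_right hs1 (by positivity)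
        _ = s ^ (n + 1) := by ring
    calc ((n:ℝ) + 1) * r ^ n ≤ (2 * r) ^ n := by rw [← h3]; exact h2
      _ ≤ s ^ (n + 1) := h4.trans h5
      _ ≤ 2 * s ^ (n + 1) := by nlinarith [pow_nonneg (le_trans zero_le_one hs1) (n+1)]
  calc ((n:ℝ) + 1) * ‖c (n + 1)‖ * r ^ n = ‖c (n + 1)‖ * (((n:ℝ) + 1) * r ^ n) := by ring
    _ ≤ ‖c (n + 1)‖ * (2 * s ^ (n + 1)) :=
        mul_le_mul_of_nonneg_left hpow (norm_nonneg _)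
    _ = 2 * (‖c (n + 1)‖ * s ^ (n + 1)) := by ring

lemma AirySprop.summable {c : ℕ → ℂ} (h : AirySprop c) (z : ℂ) :
    Summable fun n => c n * z ^ n := by
  refine Summable.of_norm ?_
  have := h ‖z‖ (norm_nonneg z)
  simpa [norm_mul, norm_pow] using this

lemma AirySprop.hasDerivAt {c : ℕ → ℂ} (h : AirySprop c) (z : ℂ) :
    HasDerivAt (fun w => ∑' n, c n * w ^ n)
      (∑' n : ℕ, ((n : ℂ) + 1) * c (n + 1) * z ^ n) z := by
  set R : ℝ := ‖z‖ + 1 with hR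
  have hR0 : 0 < R := by positivity
  have hu : Summable fun n : ℕ => ‖((n : ℂ) + 1) * c (n + 1)‖ * R ^ n := h.shift R hR0.le
  have hmain : HasDerivAt (fun w => ∑' n, c (n + 1) * w ^ (n + 1))
      (∑' n : ℕ, ((n : ℂ) + 1) * c (n + 1) * z ^ n) z := by
    refine hasDerivAt_tsum_of_isPreconnected hu Metric.isOpen_ball
      (convex_ball (0:ℂ) R).isPreconnected
      (g := fun n y => c (n + 1) * y ^ (n + 1))
      (g' := fun n y => ((n : ℂ) + 1) * c (n + 1) * y ^ n)
      (fun n y _ => ?_) (fun n y hy => ?_) (Metric.mem_ball_self hR0) ?_ ?_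
    · have := (hasDerivAt_pow (n + 1) y).const_mul (c (n + 1))
      convert this using 1
      · rfl
      push_cast
      ring
    · rw [norm_mul, norm_pow]
      have hyR : ‖y‖ ≤ R := by
        have h' := Metric.mem_ball.mp hy
        rw [dist_zero_right] at h'
        linarith
      exact mul_le_mul_of_nonneg_left (pow_le_pow_left₀ (norm_nonneg _) hyR n) (norm_nonneg _)
    · simpa using summable_zero
    · rw [Metric.mem_ball, dist_zero_right, hR]
      linarith
  have hfun : (fun w => ∑' n, c n * w ^ n)
      = fun w => c 0 + ∑' n, c (n + 1) * w ^ (n + 1) := by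
    funext w
    rw [Summable.tsum_eq_zero_add (h.summable w)]
    simp
  rw [hfun]
  exact hmain.const_add (c 0)

lemma AirySprop.deriv_eq {c : ℕ → ℂ} (h : AirySprop c) :
    (Differentiable ℂ fun w => ∑' n, c n * w ^ n) ∧
    deriv (fun w => ∑' n, c n * w ^ n)
      = fun z => ∑' n : ℕ, ((n : ℂ) + 1) * c (n + 1) * z ^ n :=
  ⟨fun z => (h.hasDerivAt z).differentiableAt,
   funext fun z => (h.hasDerivAt z).deriv⟩

/-- The real Maclaurin coefficients of the Airy function. -/
noncomputable def AiryA (n : ℕ) : ℝ :=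
  1 / ((3 : ℝ) ^ ((2 : ℝ) / 3) * Real.pi) *
    (Real.Gamma ((n + 1) / 3) / n.factorial * Real.sin (2 * (n + 1) * Real.pi / 3)) *
    ((3 : ℝ) ^ ((1 : ℝ) / 3)) ^ n

lemma AiryA_two : AiryA 2 = 0 := by
  have e : 2 * (((2:ℕ):ℝ) + 1) * Real.pi / 3 = 2 * Real.pi := by push_cast; ring
  unfold AiryA
  rw [e, Real.sin_two_pi]
  ring

lemma AiryA_rec (n : ℕ) : ((n:ℝ) + 2) * ((n:ℝ) + 3) * AiryA (n + 3) = AiryA n := by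
  unfold AiryA
  have hfac : (0:ℝ) < n.factorial := by exact_mod_cast n.factorial_pos
  have hGam : Real.Gamma (((↑(n+3):ℝ)+1)/3) = (((n:ℝ) + 1)/3) * Real.Gamma (((n:ℝ)+1)/3) := by
    have e : ((↑(n+3):ℝ) + 1) / 3 = ((n:ℝ) + 1) / 3 + 1 := by push_cast; ring
    rw [e, Real.Gamma_add_one (by positivity)]
  have hsin : Real.sin (2 * ((↑(n+3):ℝ) + 1) * Real.pi / 3)
      = Real.sin (2 * ((n:ℝ) + 1) * Real.pi / 3) := by
    have e : 2 * ((↑(n+3):ℝ) + 1) * Real.pi / 3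
        = 2 * ((n:ℝ) + 1) * Real.pi / 3 + 2 * Real.pi := by push_cast; ring
    rw [e, Real.sin_add_two_pi]
  have hfact : ((n + 3).factorial : ℝ) = ((n:ℝ) + 1) * ((n:ℝ) + 2) * ((n:ℝ) + 3) * n.factorial := by
    push_cast [Nat.factorial_succ]
    ring
  have ht3 : ((3:ℝ) ^ ((1:ℝ)/3)) ^ (n + 3) = ((3:ℝ) ^ ((1:ℝ)/3)) ^ n * 3 := by
    rw [pow_add]
    congr 1
    rw [← Real.rpow_natCast ((3:ℝ) ^ ((1:ℝ)/3)) 3, ← Real.rpow_mul (by norm_num)]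
    norm_num
  rw [hGam, hsin, hfact, ht3]
  have hπ : Real.pi ≠ 0 := Real.pi_ne_zero
  have h3 : (3:ℝ) ^ ((2:ℝ)/3) ≠ 0 := by positivity
  field_simp

lemma AirySprop_A : AirySprop (fun n => ((AiryA n : ℝ) : ℂ)) := by
  intro r hr
  have hK0 : 0 < 1 / ((3:ℝ) ^ ((2:ℝ)/3) * Real.pi) := by positivity
  have ht0 : 0 < (3:ℝ) ^ ((1:ℝ)/3) := by positivity
  have hmaj : Summable fun n : ℕ => 1 / ((3:ℝ) ^ ((2:ℝ)/3) * Real.pi) *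
      (Real.Gamma (((n:ℝ)+1)/3) / n.factorial * ((3:ℝ) ^ ((1:ℝ)/3) * r) ^ n) :=
    (airy_gamma_summable ((3:ℝ) ^ ((1:ℝ)/3) * r) (by positivity)).mul_left _
  refine Summable.of_nonneg_of_le (fun n => by positivity) (fun n => ?_) hmaj
  have hG : 0 < Real.Gamma (((n:ℝ)+1)/3) := Real.Gamma_pos_of_pos (by positivity)
  have hfac : (0:ℝ) < n.factorial := by exact_mod_cast n.factorial_pos
  have hnorm : ‖((AiryA n : ℝ) : ℂ)‖ = |AiryA n| := Complex.norm_real _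
  rw [hnorm]
  have habs : |AiryA n| ≤ 1 / ((3:ℝ) ^ ((2:ℝ)/3) * Real.pi) *
      (Real.Gamma (((n:ℝ)+1)/3) / n.factorial) * ((3:ℝ) ^ ((1:ℝ)/3)) ^ n := by
    unfold AiryA
    rw [abs_mul, abs_mul, abs_mul, abs_of_pos hK0, abs_of_pos (pow_pos ht0 n),
      abs_of_pos (div_pos hG hfac)]
    have hsin : |Real.sin (2 * ((n:ℝ)+1) * Real.pi / 3)| ≤ 1 :=
      abs_le.mpr ⟨Real.neg_one_le_sin _, Real.sin_le_one _⟩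
    have h1 : Real.Gamma (((n:ℝ)+1)/3) / n.factorial * |Real.sin (2 * ((n:ℝ)+1) * Real.pi / 3)|
        ≤ Real.Gamma (((n:ℝ)+1)/3) / n.factorial :=
      mul_le_of_le_one_right (le_of_lt (div_pos hG hfac)) hsin
    have hKnn : (0:ℝ) ≤ 1 / ((3:ℝ) ^ ((2:ℝ)/3) * Real.pi) := hK0.le
    have htn : (0:ℝ) ≤ ((3:ℝ) ^ ((1:ℝ)/3)) ^ n := (pow_pos ht0 n).le
    nlinarith [mul_le_mul_of_nonneg_left h1 hKnn]
  calc |AiryA n| * r ^ n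
      ≤ (1 / ((3:ℝ) ^ ((2:ℝ)/3) * Real.pi) *
        (Real.Gamma (((n:ℝ)+1)/3) / n.factorial) * ((3:ℝ) ^ ((1:ℝ)/3)) ^ n) * r ^ n :=
        mul_le_mul_of_nonneg_right habs (by positivity)
    _ = 1 / ((3:ℝ) ^ ((2:ℝ)/3) * Real.pi) *
        (Real.Gamma (((n:ℝ)+1)/3) / n.factorial * ((3:ℝ) ^ ((1:ℝ)/3) * r) ^ n) := by
        rw [mul_pow]
        ring


lemma Ai_eq_tsum : Ai = fun z => ∑' n : ℕ, ((AiryA n : ℝ) : ℂ) * z ^ n := by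
  funext z
  unfold Ai
  rw [← tsum_mul_left]
  congr 1
  funext n
  simp only [AiryA]
  push_cast [mul_pow]
  ring

theorem stmt16 :
    Differentiable ℂ Ai ∧ Differentiable ℂ (deriv Ai) ∧
    ∀ z : ℂ, deriv (deriv Ai) z = z * Ai z := by
  have hS : AirySprop (fun n => ((AiryA n : ℝ) : ℂ)) := AirySprop_A
  set A : ℕ → ℂ := fun n => ((AiryA n : ℝ) : ℂ) with hA
  set A1 : ℕ → ℂ := fun n => ((n:ℂ)+1) * A (n+1) with hA1
  set A2 : ℕ → ℂ := fun n => ((n:ℂ)+1) * A1 (n+1) with hA2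
  have hS1 : AirySprop A1 := hS.shift
  have hS2 : AirySprop A2 := hS1.shift
  have hAi : Ai = fun z => ∑' n : ℕ, A n * z ^ n := Ai_eq_tsum
  have hd1 : Differentiable ℂ Ai := by rw [hAi]; exact (hS.deriv_eq).1
  have hder : deriv Ai = fun z => ∑' n : ℕ, A1 n * z ^ n := by
    rw [hAi]; exact (hS.deriv_eq).2
  have hd2 : Differentiable ℂ (deriv Ai) := by rw [hder]; exact (hS1.deriv_eq).1
  have hder2 : deriv (deriv Ai) = fun z => ∑' n : ℕ, A2 n * z ^ n := by
    rw [hder]; exact (hS1.deriv_eq).2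
  refine ⟨hd1, hd2, fun z => ?_⟩
  have key0 : A2 0 = 0 := by
    simp only [hA2, hA1, hA]
    norm_num [AiryA_two]
  have keyS : ∀ n : ℕ, A2 (n + 1) = A n := by
    intro n
    simp only [hA2, hA1, hA]
    have e : n + 1 + 1 + 1 = n + 3 := by omega
    rw [e, ← AiryA_rec n]
    push_cast
    ring
  have hfin : (∑' n : ℕ, A2 n * z ^ n) = z * Ai z := by
    calc (∑' n : ℕ, A2 n * z ^ n)
        = A2 0 * z ^ 0 + ∑' n : ℕ, A2 (n + 1) * z ^ (n + 1) :=
          Summable.tsum_eq_zero_add (hS2.summable z)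
      _ = ∑' n : ℕ, A n * z ^ (n + 1) := by
          rw [key0, zero_mul, zero_add]
          exact tsum_congr fun n => by rw [keyS]
      _ = z * ∑' n : ℕ, A n * z ^ n := by
          rw [← tsum_mul_left]
          exact tsum_congr fun n => by ring
      _ = z * Ai z := by rw [hAi]
  rw [hder2]
  exact hfin
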